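/- arXiv:1301.5667 — 6 statements merged into one kernel-verified Lean document; each statement's English description precedes it below -/
import Mathlib

section
/- For every Lie algebra automorphism φ of g over k, the centralizer of φ(D) in g is the line spanned by φ(D): z_g(φ(D)) = k·φ(D). In particular, z_g(D) = k·D. -/
open Polynomial

set_option synthInstance.maxHeartbeats 1000000
set_option maxHeartbeats 1000000

/-- The truncated polynomial algebra `A = k[X]/(X^p)`. -/
noncomputable abbrev WittA (k : Type*) [Field k] (p : ℕ) : Type _ :=
  k[X] ⧸ Ideal.span ({X ^ p} : Set k[X])

/-- The coset of `X` in `A = k[X]/(X^p)`. -/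
noncomputable abbrev WittX (k : Type*) [Field k] (p : ℕ) : WittA k p :=
  Ideal.Quotient.mk (Ideal.span ({X ^ p} : Set k[X])) X

lemma witt_adjoin_top (k : Type*) [Field k] (p : ℕ) :
    Algebra.adjoin k ({WittX k p} : Set (WittA k p)) = ⊤ := by
  have h1 : ({WittX k p} : Set (WittA k p))
      = (Ideal.Quotient.mkₐ k (Ideal.span ({X ^ p} : Set k[X]))) '' {X} := by
    simp [Ideal.Quotient.mkₐ_eq_mk]
  have hsurj : Function.Surjective
      (Ideal.Quotient.mkₐ k (Ideal.span ({X ^ p} : Set k[X]))) :=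
    fun y => Ideal.Quotient.mk_surjective y
  rw [h1, ← AlgHom.map_adjoin, Polynomial.adjoin_X, Algebra.map_top,
    (AlgHom.range_eq_top _).mpr hsurj]

lemma witt_deriv_ext {k : Type*} [Field k] {p : ℕ}
    (D1 D2 : Derivation k (WittA k p) (WittA k p)) (h : D1 (WittX k p) = D2 (WittX k p)) :
    D1 = D2 :=
  Derivation.ext_of_adjoin_eq_top _ (witt_adjoin_top k p)
    (fun x hx => by rw [Set.mem_singleton_iff.mp hx]; exact h)

lemma witt_D_mk {k : Type*} [Field k] {p : ℕ}
    (D : Derivation k (WittA k p) (WittA k p)) (hD : D (WittX k p) = 1) (g : k[X]) :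
    D (Ideal.Quotient.mk (Ideal.span ({X ^ p} : Set k[X])) g)
      = Ideal.Quotient.mk (Ideal.span ({X ^ p} : Set k[X])) (derivative g) := by
  induction g using Polynomial.induction_on' with
  | add f g hf hg => rw [map_add, map_add, hf, hg, derivative_add, map_add]
  | monomial n a =>
    rw [← Polynomial.C_mul_X_pow_eq_monomial, derivative_C_mul_X_pow]
    rw [show (Ideal.Quotient.mk (Ideal.span ({X ^ p} : Set k[X]))) (C a * X ^ n)
        = algebraMap k (WittA k p) a * (WittX k p) ^ n by rw [map_mul, map_pow]; rfl,
      show (Ideal.Quotient.mk (Ideal.span ({X ^ p} : Set k[X]))) (C (a * n) * X ^ (n-1))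
        = algebraMap k (WittA k p) (a * n) * (WittX k p) ^ (n-1) by rw [map_mul, map_pow]; rfl]
    rw [Derivation.leibniz, Derivation.map_algebraMap, Derivation.leibniz_pow, hD]
    cases n with
    | zero => simp
    | succ m =>
      simp only [smul_eq_mul, mul_zero, add_zero, smul_smul, mul_one, map_pow,
        Nat.succ_sub_one, map_natCast]
      push_cast
      ring

lemma witt_const_of_deriv {k : Type*} [Field k] {p : ℕ} [CharP k p]
    (h : k[X]) (hdeg : h.natDegree < p) (hder : derivative h = 0) :
    h = C (h.coeff 0) := by
  ext n
  cases n with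
  | zero => simp
  | succ m =>
    rw [coeff_C]
    simp only [Nat.succ_ne_zero, if_false]
    by_cases hn : m + 1 ≤ h.natDegree
    · have hlt : m + 1 < p := lt_of_le_of_lt hn hdeg
      have := congrArg (fun q => coeff q m) hder
      simp only [coeff_derivative, coeff_zero] at this
      have hne : ((m : k) + 1) ≠ 0 := by
        have : ((m + 1 : ℕ) : k) ≠ 0 := by
          intro hc
          exact absurd ((CharP.cast_eq_zero_iff k p _).mp hc)
            (Nat.not_dvd_of_pos_of_lt (Nat.succ_pos m) hlt)
        simpa using this
      exact (mul_eq_zero.mp this).resolve_right hne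
    · exact coeff_eq_zero_of_natDegree_lt (lt_of_not_ge hn)

/-- Kernel of `D` on `A` consists of the constants. -/
lemma witt_ker_D {k : Type*} [Field k] {p : ℕ} (hp : p.Prime) [CharP k p]
    (D : Derivation k (WittA k p) (WittA k p)) (hD : D (WittX k p) = 1)
    (f : WittA k p) (hf : D f = 0) : ∃ c : k, f = algebraMap k (WittA k p) c := by
  obtain ⟨g, rfl⟩ := Ideal.Quotient.mk_surjective f
  set I := Ideal.span ({X ^ p} : Set k[X]) with hI
  have hmonic : (X ^ p : k[X]).Monic := monic_X_pow p
  set h := g %ₘ (X ^ p) with hh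
  have hmk : Ideal.Quotient.mk I g = Ideal.Quotient.mk I h := by
    have := Polynomial.modByMonic_add_div g (X ^ p)
    rw [← this, map_add, map_mul, Ideal.Quotient.eq_zero_iff_mem.mpr
      (Ideal.subset_span (Set.mem_singleton _)), zero_mul, add_zero]
  have hdeg : h.natDegree < p := by
    have := Polynomial.natDegree_modByMonic_lt g hmonic (by
      intro hc
      have := congrArg natDegree hc
      simp [natDegree_X_pow, hp.pos.ne'] at this)
    simpa [natDegree_X_pow] using this
  have hDf : Ideal.Quotient.mk I (derivative h) = 0 := by
    rw [← witt_D_mk D hD, ← hmk]; exact hf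
  have hdvd : (X ^ p : k[X]) ∣ derivative h := by
    rw [Ideal.Quotient.eq_zero_iff_mem, hI, Ideal.mem_span_singleton] at hDf
    exact hDf
  have hder : derivative h = 0 := by
    by_contra hne
    have h1 : p ≤ (derivative h).natDegree :=
      le_trans (by simp [natDegree_X_pow]) (Polynomial.natDegree_le_of_dvd hdvd hne)
    have h2 : (derivative h).natDegree < p :=
      lt_of_le_of_lt (Polynomial.natDegree_derivative_le h) (by omega)
    omega
  refine ⟨h.coeff 0, ?_⟩
  conv_lhs => rw [hmk, witt_const_of_deriv h hdeg hder]
  rfl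

lemma witt_lie_smul_self {k : Type*} [Field k] {p : ℕ}
    (E : Derivation k (WittA k p) (WittA k p)) (a : k) : ⁅E, a • E⁆ = 0 := by
  ext x
  simp [Derivation.commutator_apply]

lemma witt_centralizer_D {k : Type*} [Field k] {p : ℕ} (hp : p.Prime) [CharP k p]
    (D : Derivation k (WittA k p) (WittA k p)) (hD : D (WittX k p) = 1) :
    {y : Derivation k (WittA k p) (WittA k p) | ⁅D, y⁆ = 0} =
      {y : Derivation k (WittA k p) (WittA k p) | ∃ a : k, y = a • D} := by
  ext y
  simp only [Set.mem_setOf_eq]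
  constructor
  · intro hy
    have h0 : D (y (WittX k p)) = 0 := by
      have := congrArg (fun E : Derivation k (WittA k p) (WittA k p) => E (WittX k p)) hy
      simp only [Derivation.commutator_apply, Derivation.coe_zero, Pi.zero_apply] at this
      rw [hD, Derivation.map_one_eq_zero, sub_zero] at this
      exact this
    obtain ⟨c, hc⟩ := witt_ker_D hp D hD _ h0
    refine ⟨c, witt_deriv_ext _ _ ?_⟩
    rw [hc, Derivation.smul_apply, hD, Algebra.algebraMap_eq_smul_one]
  · rintro ⟨a, rfl⟩
    exact witt_lie_smul_self D a

/-- For every Lie algebra automorphism `φ` of the Witt algebra `g = Der_k(A)`, the centralizer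
of `φ(D)` in `g` is the line `k·φ(D)`; in particular `z_g(D) = k·D`. -/
theorem witt_centralizer_of_orbit_of_D (p : ℕ) (hp : p.Prime) (hp3 : 3 < p)
    (k : Type*) [Field k] [IsAlgClosed k] [CharP k p]
    (D : Derivation k (WittA k p) (WittA k p)) (hD : D (WittX k p) = 1) :
    (∀ φ : Derivation k (WittA k p) (WittA k p) ≃ₗ⁅k⁆ Derivation k (WittA k p) (WittA k p),
      {y : Derivation k (WittA k p) (WittA k p) | ⁅φ D, y⁆ = 0} =
        {y : Derivation k (WittA k p) (WittA k p) | ∃ a : k, y = a • φ D}) ∧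
    {y : Derivation k (WittA k p) (WittA k p) | ⁅D, y⁆ = 0} =
      {y : Derivation k (WittA k p) (WittA k p) | ∃ a : k, y = a • D} := by
  have hbase := witt_centralizer_D hp D hD
  refine ⟨fun φ => ?_, hbase⟩
  ext y
  simp only [Set.mem_setOf_eq]
  have hy : y = φ (φ.symm y) := (φ.apply_symm_apply y).symm
  constructor
  · intro h
    have hlie : φ ⁅D, φ.symm y⁆ = 0 := by
      rw [LieEquiv.map_lie]; rw [← hy]; exact h
    have h0 : ⁅D, φ.symm y⁆ = 0 := (φ.symm_apply_apply _).symm.trans ((congrArg φ.symm hlie).trans φ.symm.toLinearEquiv.map_zero)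
    obtain ⟨a, ha⟩ := (Set.ext_iff.mp hbase (φ.symm y)).mp h0
    have hsm : φ (a • D) = a • φ D := φ.toLinearEquiv.map_smul a D
    exact ⟨a, by rw [hy, ha, hsm]⟩
  · rintro ⟨a, rfl⟩
    exact witt_lie_smul_self (φ D) a
end

section
/- Let i be an integer with 1 ≤ i < (p-1)/2 and let x ∈ g_i \ g_{i+1}. Then the centralizer of x in g is z_g(x) = k·x ⊕ g_{p-1-i}; that is, z_g(x) = {a•x + z : a ∈ k, z ∈ g_{p-1-i}}, and this sum is direct (k·x ∩ g_{p-1-i} = 0). -/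
open Polynomial

set_option synthInstance.maxHeartbeats 1000000
set_option maxHeartbeats 1000000

section Aux

variable {k : Type*} [Field k] {p : ℕ}

/-- The quotient map. -/
noncomputable abbrev wmk (k : Type*) [Field k] (p : ℕ) : k[X] →+* WittA k p :=
  Ideal.Quotient.mk (Ideal.span ({X ^ p} : Set k[X]))

lemma wmk_surj : Function.Surjective (wmk k p) :=
  Ideal.Quotient.mk_surjective

lemma wmk_eq_zero {q : k[X]} : wmk k p q = 0 ↔ X ^ p ∣ q := by
  rw [Ideal.Quotient.eq_zero_iff_mem, Ideal.mem_span_singleton]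

lemma wittX_pow (m : ℕ) : WittX k p ^ m = wmk k p (X ^ m) := by
  rw [map_pow]

lemma wmk_C (a : k) : wmk k p (C a) = algebraMap k (WittA k p) a := by
  have := (Ideal.Quotient.mkₐ k (Ideal.span ({X ^ p} : Set k[X]))).commutes a
  rw [← this, Polynomial.algebraMap_eq, Ideal.Quotient.mkₐ_eq_mk]

lemma wmk_smul (a : k) (q : k[X]) : wmk k p (C a * q) = a • wmk k p q := by
  rw [← Polynomial.smul_eq_C_mul, ← Ideal.Quotient.mkₐ_eq_mk k, map_smul]

lemma mem_span_of_dvd {m : ℕ} {q : k[X]} (h : X ^ m ∣ q) :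
    wmk k p q ∈ Ideal.span {WittX k p ^ m} := by
  obtain ⟨b, rfl⟩ := h
  rw [wittX_pow, map_mul]
  exact Ideal.mem_span_singleton.2 ⟨wmk k p b, rfl⟩

lemma mem_span_iff {m : ℕ} (hm : m ≤ p) {q : k[X]} :
    wmk k p q ∈ Ideal.span {WittX k p ^ m} ↔ X ^ m ∣ q := by
  refine ⟨fun h => ?_, mem_span_of_dvd⟩
  rw [Ideal.mem_span_singleton] at h
  obtain ⟨b, hb⟩ := h
  obtain ⟨b₀, rfl⟩ := wmk_surj (k := k) (p := p) b
  rw [wittX_pow, ← map_mul, Ideal.Quotient.mk_eq_mk_iff_sub_mem,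
    Ideal.mem_span_singleton] at hb
  obtain ⟨t, ht⟩ := hb
  have hq : q = X ^ m * b₀ + X ^ p * t := by linear_combination ht
  rw [hq]
  exact dvd_add (Dvd.intro _ rfl) (dvd_mul_of_dvd_left (pow_dvd_pow _ hm) _)

/-- Any derivation of `A` is `f ↦ f' * d X`. -/
lemma deriv_apply (d : Derivation k (WittA k p) (WittA k p)) (q : k[X]) :
    d (wmk k p q) = wmk k p (derivative q) * d (WittX k p) := by
  induction q using Polynomial.induction_on' with
  | add f g hf hg => simp only [map_add, hf, hg, add_mul]
  | monomial n a =>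
    have hC : d (wmk k p (C a)) = 0 := by rw [wmk_C]; exact d.map_algebraMap a
    rw [derivative_monomial, ← C_mul_X_pow_eq_monomial, ← C_mul_X_pow_eq_monomial,
      C_mul, C_eq_natCast,
      (wmk k p).map_mul, (wmk k p).map_mul, (wmk k p).map_mul, (wmk k p).map_pow,
      (wmk k p).map_pow, map_natCast (wmk k p),
      d.leibniz, Derivation.leibniz_pow, hC, smul_zero, add_zero,
      smul_eq_mul, smul_eq_mul, nsmul_eq_mul]
    ring

lemma deriv_eq_zero (d : Derivation k (WittA k p) (WittA k p))
    (h : d (WittX k p) = 0) : d = 0 := by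
  ext b
  obtain ⟨q, rfl⟩ := wmk_surj (k := k) (p := p) b
  rw [deriv_apply, h, mul_zero, Derivation.zero_apply]

lemma dvd_derivative {m : ℕ} {q : k[X]} (h : X ^ m ∣ q) :
    (X : k[X]) ^ (m - 1) ∣ derivative q := by
  rw [X_pow_dvd_iff] at h ⊢
  intro d hd
  rw [coeff_derivative, h (d + 1) (by omega), zero_mul]


lemma key_coeff {k : Type*} [Field k] {p : ℕ} [CharP k p]
    {i j : ℕ} (hij : i + j < p) (hi1p : i + 1 < p) (hji : j ≠ i + 1)
    {f g u v : k[X]} (hu : f = X ^ (i + 1) * u) (hv : g = X ^ j * v)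
    (hu0 : u.coeff 0 ≠ 0)
    (hc0 : (derivative g * f - derivative f * g).coeff (i + j) = 0) :
    v.coeff 0 = 0 := by
  have h1 : (derivative g * f).coeff (i + j) = (j : k) * (v.coeff 0 * u.coeff 0) := by
    rcases Nat.eq_zero_or_pos j with hj0 | hj0
    · subst hj0
      have hdvd : (X : k[X]) ^ (i + 1) ∣ derivative g * f :=
        dvd_mul_of_dvd_right (hu ▸ Dvd.intro _ rfl) _
      rw [X_pow_dvd_iff.1 hdvd (i + 0) (by omega)]
      simp
    · have e1 : derivative g * f
          = C (j : k) * (X ^ (i + j) * (v * u)) + X ^ (i + j + 1) * (derivative v * u) := by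
        rw [hv, hu, derivative_mul, derivative_X_pow,
          show i + j = (j - 1) + (i + 1) by omega,
          show (j - 1) + (i + 1) + 1 = j + (i + 1) by omega]
        ring
      rw [e1, coeff_add, coeff_C_mul]
      have e2 := coeff_X_pow_mul (v * u) (i + j) 0
      rw [zero_add] at e2
      have e3 : ((X : k[X]) ^ (i + j + 1) * (derivative v * u)).coeff (i + j) = 0 :=
        X_pow_dvd_iff.1 (Dvd.intro _ rfl) _ (by omega)
      rw [e2, e3, mul_coeff_zero, add_zero]
  have h2 : (derivative f * g).coeff (i + j)
      = (((i + 1 : ℕ)) : k) * (u.coeff 0 * v.coeff 0) := by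
    have e1 : derivative f * g
        = C (((i + 1 : ℕ)) : k) * (X ^ (i + j) * (u * v)) + X ^ (i + j + 1) * (derivative u * v) := by
      rw [hu, hv, derivative_mul, derivative_X_pow, Nat.add_sub_cancel,
        show i + j + 1 = (i + 1) + j by omega]
      ring
    rw [e1, coeff_add, coeff_C_mul]
    have e2 := coeff_X_pow_mul (u * v) (i + j) 0
    rw [zero_add] at e2
    have e3 : ((X : k[X]) ^ (i + j + 1) * (derivative u * v)).coeff (i + j) = 0 :=
      X_pow_dvd_iff.1 (Dvd.intro _ rfl) _ (by omega)
    rw [e2, e3, mul_coeff_zero, add_zero]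
  have hcj : ((j : k) - ((i + 1 : ℕ) : k)) * (v.coeff 0 * u.coeff 0) = 0 := by
    rw [coeff_sub, h1, h2] at hc0
    linear_combination hc0
  have hne : (j : k) ≠ ((i + 1 : ℕ) : k) := by
    intro h
    have hmod := (CharP.natCast_eq_natCast k p).1 h
    exact hji (hmod.eq_of_lt_of_lt (by omega) hi1p)
  rcases mul_eq_zero.1 hcj with h | h
  · exact absurd (sub_eq_zero.1 h) hne
  · rcases mul_eq_zero.1 h with h' | h'
    · exact h'
    · exact absurd h' hu0

lemma key_dvd {k : Type*} [Field k] {p : ℕ} [CharP k p] (hpp : p.Prime)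
    {i : ℕ} (hi1 : 1 ≤ i) (hi2 : 2 * i < p - 1)
    {f g : k[X]} (hf : (X : k[X]) ^ (i + 1) ∣ f) (hfc : f.coeff (i + 1) ≠ 0)
    (hgc : g.coeff (i + 1) = 0)
    (hcomm : (X : k[X]) ^ p ∣ derivative g * f - derivative f * g) :
    (X : k[X]) ^ (p - i) ∣ g := by
  have hp2 : 2 ≤ p := hpp.two_le
  obtain ⟨u, hu⟩ := hf
  have hu0 : u.coeff 0 ≠ 0 := by
    have e2 := coeff_X_pow_mul u (i + 1) 0
    rw [zero_add] at e2
    rw [hu, e2] at hfc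
    exact hfc
  suffices h : ∀ j, j ≤ p - i → (X : k[X]) ^ j ∣ g from h _ le_rfl
  intro j
  induction j with
  | zero => intro _; simp
  | succ j ih =>
    intro hj
    obtain ⟨v, hv⟩ := ih (by omega)
    have hcj : g.coeff j = 0 := by
      by_cases hje : j = i + 1
      · rw [hje]; exact hgc
      · have hc0 : (derivative g * f - derivative f * g).coeff (i + j) = 0 :=
          X_pow_dvd_iff.1 hcomm _ (by omega)
        have hv0 : v.coeff 0 = 0 :=
          key_coeff (p := p) (by omega) (by omega) hje hu hv hu0 hc0
        have e2 := coeff_X_pow_mul v j 0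
        rw [zero_add] at e2
        rw [hv, e2]
        exact hv0
    rw [X_pow_dvd_iff]
    intro d hd
    rcases Nat.lt_or_ge d j with hdj | hdj
    · exact X_pow_dvd_iff.1 ⟨v, hv⟩ d hdj
    · have : d = j := by omega
      rw [this]
      exact hcj

end Aux

/-- For `1 ≤ i < (p-1)/2` and `x ∈ g_i \ g_{i+1}`, the centralizer of `x` in the Witt algebra
`g = Der_k(A)` is `z_g(x) = k·x ⊕ g_{p-1-i}`: every centralizing element is of the form
`a • x + z` with `z ∈ g_{p-1-i}`, and the sum is direct (`k·x ∩ g_{p-1-i} = 0`).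
Here `g_j = {d : d(X) ∈ X^{j+1}·A}`, so `g_{p-1-i} = {d : d(X) ∈ X^{p-i}·A}`. -/
theorem witt_centralizer_small_filtration (p : ℕ) (hp : p.Prime) (hp3 : 3 < p)
    (k : Type*) [Field k] [IsAlgClosed k] [CharP k p]
    (i : ℕ) (hi1 : 1 ≤ i) (hi2 : 2 * i < p - 1)
    (x : Derivation k (WittA k p) (WittA k p))
    (hx1 : x (WittX k p) ∈ Ideal.span {WittX k p ^ (i + 1)})
    (hx2 : x (WittX k p) ∉ Ideal.span {WittX k p ^ (i + 2)}) :
    ({y : Derivation k (WittA k p) (WittA k p) | ⁅x, y⁆ = 0} =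
      {y : Derivation k (WittA k p) (WittA k p) |
        ∃ (a : k) (z : Derivation k (WittA k p) (WittA k p)),
          z (WittX k p) ∈ Ideal.span {WittX k p ^ (p - i)} ∧ y = a • x + z}) ∧
    (∀ a : k, (a • x) (WittX k p) ∈ Ideal.span {WittX k p ^ (p - i)} → a • x = 0) := by
  have hp2 : 2 ≤ p := hp.two_le
  obtain ⟨b, hb⟩ := Ideal.mem_span_singleton.1 hx1
  obtain ⟨b₀, rfl⟩ := wmk_surj (k := k) (p := p) b
  set f : k[X] := X ^ (i + 1) * b₀ with hfdef
  have hxX : x (WittX k p) = wmk k p f := by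
    rw [hb, wittX_pow, ← map_mul]
  have hfdvd : (X : k[X]) ^ (i + 1) ∣ f := ⟨b₀, rfl⟩
  have hfc : f.coeff (i + 1) ≠ 0 := by
    intro h0
    apply hx2
    rw [hxX]
    apply mem_span_of_dvd
    rw [X_pow_dvd_iff]
    intro d hd
    rcases Nat.lt_or_ge d (i + 1) with h | h
    · exact X_pow_dvd_iff.1 hfdvd d h
    · have hd' : d = i + 1 := by omega
      rw [hd']; exact h0
  have part2 : ∀ a : k, (a • x) (WittX k p) ∈ Ideal.span {WittX k p ^ (p - i)} → a • x = 0 := by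
    intro a ha
    have h1 : (a • x) (WittX k p) = wmk k p (C a * f) := by
      rw [Derivation.smul_apply, hxX, ← wmk_smul]
    rw [h1, mem_span_iff (by omega)] at ha
    have h0 : (C a * f).coeff (i + 1) = 0 := X_pow_dvd_iff.1 ha _ (by omega)
    rw [coeff_C_mul] at h0
    rcases mul_eq_zero.1 h0 with h | h
    · rw [h, zero_smul]
    · exact absurd h hfc
  refine ⟨?_, part2⟩
  ext y
  simp only [Set.mem_setOf_eq]
  constructor
  · intro hy
    obtain ⟨g, hg⟩ := wmk_surj (k := k) (p := p) (y (WittX k p))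
    have h : (⁅x, y⁆ : Derivation k (WittA k p) (WittA k p)) (WittX k p) = 0 := by
      rw [hy, Derivation.zero_apply]
    have e1 : x (y (WittX k p)) = wmk k p (derivative g * f) := by
      rw [← hg, deriv_apply, hxX, ← map_mul]
    have e2 : y (x (WittX k p)) = wmk k p (derivative f * g) := by
      rw [hxX, deriv_apply, ← hg, ← map_mul]
    rw [Derivation.commutator_apply, e1, e2, ← map_sub] at h
    have hdvd : (X : k[X]) ^ p ∣ derivative g * f - derivative f * g := wmk_eq_zero.1 h
    set a : k := g.coeff (i + 1) / f.coeff (i + 1) with hadef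
    refine ⟨a, y - a • x, ?_, by abel⟩
    have hg1c : (g - C a * f).coeff (i + 1) = 0 := by
      rw [coeff_sub, coeff_C_mul, hadef, div_mul_cancel₀ _ hfc, sub_self]
    have hcomm1 : (X : k[X]) ^ p ∣ derivative (g - C a * f) * f - derivative f * (g - C a * f) := by
      have e : derivative (g - C a * f) * f - derivative f * (g - C a * f)
          = derivative g * f - derivative f * g := by
        rw [derivative_sub, derivative_C_mul]
        ring
      rw [e]; exact hdvd
    have hdg : (X : k[X]) ^ (p - i) ∣ g - C a * f := key_dvd hp hi1 hi2 hfdvd hfc hg1c hcomm1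
    have hz : (y - a • x) (WittX k p) = wmk k p (g - C a * f) := by
      rw [Derivation.sub_apply, Derivation.smul_apply, ← hg, hxX, ← wmk_smul, ← map_sub]
    rw [hz]
    exact mem_span_of_dvd hdg
  · rintro ⟨a, z, hzmem, rfl⟩
    obtain ⟨c, hc⟩ := Ideal.mem_span_singleton.1 hzmem
    obtain ⟨b₁, rfl⟩ := wmk_surj (k := k) (p := p) c
    have hzX : z (WittX k p) = wmk k p (X ^ (p - i) * b₁) := by
      rw [hc, wittX_pow, ← map_mul]
    have hxg : x (z (WittX k p)) = 0 := by
      rw [hzX, deriv_apply, hxX, ← map_mul, wmk_eq_zero]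
      have h1 : (X : k[X]) ^ (p - i - 1) ∣ derivative (X ^ (p - i) * b₁) :=
        dvd_derivative ⟨b₁, rfl⟩
      have h2 := mul_dvd_mul h1 hfdvd
      rw [← pow_add, show p - i - 1 + (i + 1) = p by omega] at h2
      exact h2
    have hzf : z (x (WittX k p)) = 0 := by
      rw [hxX, deriv_apply, hzX, ← map_mul, wmk_eq_zero]
      have h1 : (X : k[X]) ^ i ∣ derivative f := by
        have h1' := dvd_derivative hfdvd
        rwa [Nat.add_sub_cancel] at h1'
      have h2 : (X : k[X]) ^ (p - i) ∣ X ^ (p - i) * b₁ := ⟨b₁, rfl⟩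
      have h3 := mul_dvd_mul h1 h2
      rw [← pow_add, show i + (p - i) = p by omega] at h3
      exact h3
    apply deriv_eq_zero
    rw [Derivation.commutator_apply, Derivation.add_apply, Derivation.smul_apply, map_add,
      Derivation.map_smul, Derivation.add_apply, Derivation.smul_apply, hxg, hzf]
    abel
end

section
/- For every nonzero x ∈ g_1, the centralizer of x in g is contained in g_1; consequently the centralizer of x in g_1 coincides with its centralizer in g: z_{g_1}(x) = z_g(x). -/
open Polynomial

set_option synthInstance.maxHeartbeats 1000000
set_option maxHeartbeats 1000000

/-- Chain rule in the truncated polynomial algebra. -/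
lemma witt_chain (p : ℕ) {k : Type*} [Field k]
    (d : Derivation k (WittA k p) (WittA k p)) (Q : k[X]) :
    d (Ideal.Quotient.mk (Ideal.span ({X ^ p} : Set k[X])) Q) =
      Ideal.Quotient.mk (Ideal.span ({X ^ p} : Set k[X])) (derivative Q) * d (WittX k p) := by
  have hmk : ∀ R : k[X], Ideal.Quotient.mk (Ideal.span ({X ^ p} : Set k[X])) R
      = aeval (WittX k p) R := by
    intro R
    have h := aeval_algHom_apply
      (Ideal.Quotient.mkₐ k (Ideal.span ({X ^ p} : Set k[X]))) X R
    simp only [aeval_X_left_apply, Ideal.Quotient.mkₐ_eq_mk] at h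
    exact h.symm
  rw [hmk Q, hmk (derivative Q), Derivation.map_aeval, smul_eq_mul]

/-- Key polynomial computation. -/
lemma witt_key (p : ℕ) (hp : p.Prime) {k : Type*} [Field k] [CharP k p]
    (F G : k[X]) (hF : F ≠ 0) (hdeg : F.natDegree < p) (hF2 : (X : k[X]) ^ 2 ∣ F)
    (hD : (X : k[X]) ^ p ∣ F * derivative G - G * derivative F) : (X : k[X]) ^ 2 ∣ G := by
  set m := F.rootMultiplicity 0 with hm
  obtain ⟨u, huF, hu⟩ := F.exists_eq_pow_rootMultiplicity_mul_and_not_dvd hF 0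
  rw [map_zero, sub_zero] at huF hu
  rw [← hm] at huF
  have hm2 : 2 ≤ m := by
    rw [hm, Polynomial.le_rootMultiplicity_iff hF]
    simpa using hF2
  have hmlt : m < p := by
    have h1 : (X : k[X]) ^ m ∣ F := ⟨u, huF⟩
    have := Polynomial.natDegree_le_of_dvd h1 hF
    rw [natDegree_X_pow] at this
    omega
  have hcne : (m : k) ≠ 0 := by
    rw [Ne, CharP.cast_eq_zero_iff k p m]
    intro hd
    have := Nat.le_of_dvd (by omega) hd
    omega
  have hc1 : (1 : k) - (m : k) ≠ 0 := by
    intro h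
    have hmk : ((m - 1 : ℕ) : k) = 0 := by
      push_cast [Nat.cast_sub (by omega : 1 ≤ m)]
      linear_combination -h
    rw [CharP.cast_eq_zero_iff k p (m - 1)] at hmk
    have := Nat.le_of_dvd (by omega) hmk
    omega
  obtain ⟨n, hmn⟩ : ∃ n, m = n + 2 := ⟨m - 2, by omega⟩
  have key : F * derivative G - G * derivative F
      = X ^ (n + 1) * (X * u * derivative G - C (m : k) * u * G - X * derivative u * G) := by
    have h1 : F = X ^ (n + 2) * u := by rw [huF, hmn]
    have h2 : derivative F = C (m : k) * X ^ (n + 1) * u + X ^ (n + 2) * derivative u := by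
      rw [h1, derivative_mul, derivative_X_pow]
      have : ((n + 2 : ℕ) : k) = (m : k) := by rw [hmn]
      rw [this, show n + 2 - 1 = n + 1 by omega]
    rw [h2, h1]; ring
  set E := X * u * derivative G - C (m : k) * u * G - X * derivative u * G with hE
  have hE2 : (X : k[X]) ^ 2 ∣ E := by
    have hsplit : (X : k[X]) ^ p = X ^ (n + 1) * X ^ (p - (n + 1)) := by
      rw [← pow_add]; congr 1; omega
    rw [key, hsplit] at hD
    have hXne : (X : k[X]) ^ (n + 1) ≠ 0 := pow_ne_zero _ X_ne_zero
    have h4 : (X : k[X]) ^ (p - (n + 1)) ∣ E := (mul_dvd_mul_iff_left hXne).mp hD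
    exact dvd_trans (pow_dvd_pow X (by omega)) h4
  have hXdvdE : (X : k[X]) ∣ E := dvd_trans (dvd_pow_self X two_ne_zero) hE2
  have hXG : (X : k[X]) ∣ G := by
    have h5 : C (m : k) * u * G = (X * u * derivative G - X * derivative u * G) - E := by
      rw [hE]; ring
    have h6 : (X : k[X]) ∣ C (m : k) * u * G := by
      rw [h5]
      exact dvd_sub (dvd_sub ⟨u * derivative G, by ring⟩ ⟨derivative u * G, by ring⟩) hXdvdE
    rcases (Polynomial.prime_X (R := k)).2.2 _ _ h6 with h | h
    · rcases (Polynomial.prime_X (R := k)).2.2 _ _ h with h' | h'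
      · exact absurd (Polynomial.X_dvd_iff.mp h') (by simpa using hcne)
      · exact absurd h' hu
    · exact h
  obtain ⟨h, hGh⟩ := hXG
  have hdG : derivative G = h + X * derivative h := by
    rw [hGh, derivative_mul, derivative_X]; ring
  have hE' : E = X * ((1 - C (m : k)) * u * h + X * u * derivative h - X * derivative u * h) := by
    rw [hE, hdG, hGh]; ring
  have hXh : (X : k[X]) ∣ h := by
    have h7 : (X : k[X]) ∣ (1 - C (m : k)) * u * h + X * u * derivative h - X * derivative u * h := by
      have hXX : (X : k[X]) ^ 2 = X * X := sq X
      rw [hE', hXX] at hE2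
      exact (mul_dvd_mul_iff_left (Polynomial.X_ne_zero (R := k))).mp hE2
    have h8 : (X : k[X]) ∣ (1 - C (m : k)) * u * h := by
      have h9 : (1 - C (m : k)) * u * h =
          ((1 - C (m : k)) * u * h + X * u * derivative h - X * derivative u * h)
            - X * u * derivative h + X * derivative u * h := by ring
      rw [h9]
      exact dvd_add (dvd_sub h7 ⟨u * derivative h, by ring⟩) ⟨derivative u * h, by ring⟩
    rcases (Polynomial.prime_X (R := k)).2.2 _ _ h8 with h | h
    · rcases (Polynomial.prime_X (R := k)).2.2 _ _ h with h' | h'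
      · exfalso
        apply hc1
        have := Polynomial.X_dvd_iff.mp h'
        simpa using this
      · exact absurd h' hu
    · exact h
  obtain ⟨h2, hh2⟩ := hXh
  exact ⟨h2, by rw [hGh, hh2]; ring⟩

/-- For every nonzero `x ∈ g_1`, the centralizer of `x` in the Witt algebra `g = Der_k(A)` is
contained in `g_1`; consequently the centralizer of `x` in `g_1` coincides with its centralizer
in `g`: `z_{g_1}(x) = z_g(x)`.  Here `g_1 = {d : d(X) ∈ X²·A}`. -/
theorem witt_centralizer_in_g1 (p : ℕ) (hp : p.Prime) (hp3 : 3 < p)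
    (k : Type*) [Field k] [IsAlgClosed k] [CharP k p]
    (x : Derivation k (WittA k p) (WittA k p)) (hx0 : x ≠ 0)
    (hx : x (WittX k p) ∈ Ideal.span {WittX k p ^ 2}) :
    ({y : Derivation k (WittA k p) (WittA k p) | ⁅x, y⁆ = 0} ⊆
      {y : Derivation k (WittA k p) (WittA k p) |
        y (WittX k p) ∈ Ideal.span {WittX k p ^ 2}}) ∧
    {y : Derivation k (WittA k p) (WittA k p) |
        y (WittX k p) ∈ Ideal.span {WittX k p ^ 2} ∧ ⁅x, y⁆ = 0} =
      {y : Derivation k (WittA k p) (WittA k p) | ⁅x, y⁆ = 0} := by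
  set I : Ideal k[X] := Ideal.span ({X ^ p} : Set k[X]) with hI
  have hIdvd : ∀ R : k[X], Ideal.Quotient.mk I R = 0 ↔ (X : k[X]) ^ p ∣ R := by
    intro R
    rw [Ideal.Quotient.eq_zero_iff_mem, hI, Ideal.mem_span_singleton]
  -- representative of x X̄
  obtain ⟨F0, hF0⟩ := Ideal.Quotient.mk_surjective (x (WittX k p))
  set F : k[X] := F0 %ₘ (X ^ p) with hFdef
  have hmonic : ((X : k[X]) ^ p).Monic := monic_X_pow p
  have hFmk : Ideal.Quotient.mk I F = x (WittX k p) := by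
    rw [← hF0]
    conv_rhs => rw [← modByMonic_add_div F0 ((X : k[X]) ^ p)]
    rw [map_add, map_mul]
    have : Ideal.Quotient.mk I ((X : k[X]) ^ p) = 0 := by
      rw [hIdvd]
    rw [this, zero_mul, add_zero]
  have hxX : x (WittX k p) ≠ 0 := by
    intro h
    apply hx0
    ext a
    obtain ⟨Q, rfl⟩ := Ideal.Quotient.mk_surjective a
    rw [witt_chain p x Q, h, mul_zero]
    rfl
  have hFne : F ≠ 0 := by
    intro h
    apply hxX
    rw [← hFmk, h, map_zero]
  have hFdeg : F.natDegree < p := by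
    have h1 := degree_modByMonic_lt F0 hmonic
    rw [degree_X_pow] at h1
    rw [← hFdef] at h1
    exact (natDegree_lt_iff_degree_lt hFne).mpr h1
  have hF2 : (X : k[X]) ^ 2 ∣ F := by
    rw [Ideal.mem_span_singleton] at hx
    obtain ⟨c, hc⟩ := hx
    obtain ⟨H, rfl⟩ := Ideal.Quotient.mk_surjective c
    have h1 : Ideal.Quotient.mk I (F - X ^ 2 * H) = 0 := by
      rw [map_sub, hFmk, hc, map_mul, map_pow]
      ring
    rw [hIdvd] at h1
    have h2 : (X : k[X]) ^ 2 ∣ F - X ^ 2 * H → (X : k[X]) ^ 2 ∣ F := by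
      intro h
      have := dvd_add h (Dvd.intro H rfl)
      simpa using this
    exact h2 (dvd_trans (pow_dvd_pow X (by omega)) h1)
  have hsub : ({y : Derivation k (WittA k p) (WittA k p) | ⁅x, y⁆ = 0} ⊆
      {y : Derivation k (WittA k p) (WittA k p) |
        y (WittX k p) ∈ Ideal.span {WittX k p ^ 2}}) := by
    intro y hy
    simp only [Set.mem_setOf_eq] at hy ⊢
    obtain ⟨G0, hG0⟩ := Ideal.Quotient.mk_surjective (y (WittX k p))
    set G : k[X] := G0 with hGdef
    have h0 : x (y (WittX k p)) - y (x (WittX k p)) = 0 := by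
      rw [← Derivation.commutator_apply, hy]
      rfl
    have h1 : Ideal.Quotient.mk I (F * derivative G - G * derivative F) = 0 := by
      have hxy : x (y (WittX k p)) = Ideal.Quotient.mk I (derivative G * F) := by
        rw [← hG0, witt_chain p x G, ← hFmk, ← map_mul]
      have hyx : y (x (WittX k p)) = Ideal.Quotient.mk I (derivative F * G) := by
        rw [← hFmk, witt_chain p y F, ← hG0, ← map_mul]
      have : Ideal.Quotient.mk I (derivative G * F - derivative F * G) = 0 := by
        rw [map_sub, ← hxy, ← hyx, h0]
      have heq : F * derivative G - G * derivative F
          = derivative G * F - derivative F * G := by ring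
      rw [heq]
      exact this
    rw [hIdvd] at h1
    have hG2 : (X : k[X]) ^ 2 ∣ G := witt_key p hp F G hFne hFdeg hF2 h1
    obtain ⟨h, hh⟩ := hG2
    rw [Ideal.mem_span_singleton]
    refine ⟨Ideal.Quotient.mk I h, ?_⟩
    rw [← hG0, hh, map_mul, map_pow]
  refine ⟨hsub, ?_⟩
  ext y
  simp only [Set.mem_setOf_eq]
  constructor
  · exact fun h => h.2
  · exact fun h => ⟨hsub h, h⟩
end

section
/- Let i be an integer with (p-1)/2 ≤ i ≤ p-2, and set C(i) = {(x,y) ∈ N × N : x ∈ g_i \ g_{i+1} and [x,y] = 0}. Then C(i) = (g_i \ g_{i+1}) × g_{p-1-i}; that is, for x ∈ g_i \ g_{i+1} and y ∈ N, one has [x,y] = 0 if and only if y ∈ g_{p-1-i}, and every element of g_{p-1-i} lies in N. -/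
open Polynomial

set_option synthInstance.maxHeartbeats 1000000
set_option maxHeartbeats 1000000

section Aux
variable {k : Type*} [Field k] {p : ℕ}

lemma witt_mk_eq_aeval (Q : k[X]) :
    Ideal.Quotient.mk (Ideal.span ({X ^ p} : Set k[X])) Q = aeval (WittX k p) Q := by
  have : WittX k p = Ideal.Quotient.mkₐ k (Ideal.span ({X ^ p} : Set k[X])) X := rfl
  rw [this, aeval_algHom_apply, aeval_X_left_apply, Ideal.Quotient.mkₐ_eq_mk]

lemma witt_d_apply (d : Derivation k (WittA k p) (WittA k p)) (Q : k[X]) :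
    d (Ideal.Quotient.mk (Ideal.span ({X ^ p} : Set k[X])) Q) =
      Ideal.Quotient.mk (Ideal.span ({X ^ p} : Set k[X])) (derivative Q) * d (WittX k p) := by
  rw [witt_mk_eq_aeval, Derivation.map_aeval, ← witt_mk_eq_aeval, smul_eq_mul]

lemma witt_d_eq_zero_iff (d : Derivation k (WittA k p) (WittA k p)) :
    d = 0 ↔ d (WittX k p) = 0 := by
  constructor
  · intro h; rw [h]; rfl
  · intro h
    ext a
    obtain ⟨Q, rfl⟩ := Ideal.Quotient.mk_surjective a
    rw [witt_d_apply, h, mul_zero, Derivation.coe_zero, Pi.zero_apply]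

lemma witt_mem_span_iff {j : ℕ} (hj : j ≤ p) (Q : k[X]) :
    Ideal.Quotient.mk (Ideal.span ({X ^ p} : Set k[X])) Q ∈ Ideal.span {WittX k p ^ j} ↔
      X ^ j ∣ Q := by
  constructor
  · intro h
    rw [Ideal.mem_span_singleton'] at h
    obtain ⟨a, ha⟩ := h
    obtain ⟨H, rfl⟩ := Ideal.Quotient.mk_surjective a
    have h0 : Ideal.Quotient.mk (Ideal.span ({X ^ p} : Set k[X])) (H * X ^ j - Q) = 0 := by
      rw [map_sub, map_mul, map_pow, ha, sub_self]
    rw [Ideal.Quotient.eq_zero_iff_mem, Ideal.mem_span_singleton] at h0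
    have h2 : X ^ j ∣ H * X ^ j - Q := dvd_trans (pow_dvd_pow X hj) h0
    have h3 : (X : k[X]) ^ j ∣ H * X ^ j := dvd_mul_left _ _
    simpa using dvd_sub h3 h2
  · rintro ⟨c, rfl⟩
    rw [map_mul, map_pow]
    exact Ideal.mul_mem_right _ _ (Ideal.subset_span (Set.mem_singleton _))

lemma witt_step (d : Derivation k (WittA k p) (WittA k p))
    (h : d (WittX k p) ∈ Ideal.span {WittX k p ^ 2}) (n : ℕ) (a : WittA k p)
    (ha : a ∈ Ideal.span {WittX k p ^ n}) :
    d a ∈ Ideal.span {WittX k p ^ (n + 1)} := by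
  obtain ⟨c, rfl⟩ := Ideal.mem_span_singleton'.mp ha
  obtain ⟨w, hw⟩ := Ideal.mem_span_singleton'.mp h
  have hdc : ∀ b : WittA k p, ∃ v, d b = v * WittX k p ^ 2 := by
    intro b
    obtain ⟨Q, rfl⟩ := Ideal.Quotient.mk_surjective b
    refine ⟨Ideal.Quotient.mk _ (derivative Q) * w, ?_⟩
    rw [witt_d_apply, ← hw]; ring
  rw [Derivation.leibniz]
  apply Ideal.add_mem
  · rw [Derivation.leibniz_pow, ← hw]
    simp only [smul_eq_mul, nsmul_eq_mul]
    rcases n with _ | m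
    · simp
    · rw [Ideal.mem_span_singleton]
      exact ⟨c * ((m + 1 : ℕ) : WittA k p) * w, by push_cast; ring⟩
  · obtain ⟨v, hv⟩ := hdc c
    rw [smul_eq_mul, hv, Ideal.mem_span_singleton]
    exact ⟨v * WittX k p, by ring⟩

lemma witt_nilp (hp : 0 < p) (d : Derivation k (WittA k p) (WittA k p))
    (h : d (WittX k p) ∈ Ideal.span {WittX k p ^ 2}) :
    d.toLinearMap ^ p = 0 := by
  have key : ∀ n (a : WittA k p), (d.toLinearMap ^ n) a ∈ Ideal.span {WittX k p ^ n} := by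
    intro n
    induction n with
    | zero => intro a; simpa using Ideal.mem_span_singleton.mpr (one_dvd a)
    | succ n ih =>
      intro a
      have hstep : (d.toLinearMap ^ (n + 1)) a = d ((d.toLinearMap ^ n) a) := by
        rw [pow_succ', Module.End.mul_apply]; rfl
      rw [hstep]
      exact witt_step d h n _ (ih a)
  refine LinearMap.ext fun a => ?_
  have := key p a
  have hz : WittX k p ^ p = 0 := by
    rw [← map_pow, Ideal.Quotient.eq_zero_iff_mem]
    exact Ideal.subset_span (Set.mem_singleton _)
  rw [hz, Ideal.span_singleton_eq_bot.mpr rfl, Ideal.mem_bot] at this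
  simpa using this

lemma witt_bracket_iff (x y : Derivation k (WittA k p) (WittA k p)) {F G : k[X]}
    (hF : Ideal.Quotient.mk (Ideal.span ({X ^ p} : Set k[X])) F = x (WittX k p))
    (hG : Ideal.Quotient.mk (Ideal.span ({X ^ p} : Set k[X])) G = y (WittX k p)) :
    ⁅x, y⁆ = 0 ↔ (X : k[X]) ^ p ∣ F * derivative G - G * derivative F := by
  have h1 : ⁅x, y⁆ (WittX k p) =
      Ideal.Quotient.mk (Ideal.span ({X ^ p} : Set k[X]))
        (F * derivative G - G * derivative F) := by
    rw [Derivation.commutator_apply, ← hG, ← hF, witt_d_apply x G, witt_d_apply y F, ← hF, ← hG,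
      map_sub, map_mul, map_mul]
    ring
  rw [witt_d_eq_zero_iff, h1, Ideal.Quotient.eq_zero_iff_mem, Ideal.mem_span_singleton]

end Aux

section Poly
variable {k : Type*} [Field k] {p : ℕ}

lemma poly_dvd_derivative {j : ℕ} {F : k[X]} (h : X ^ (j + 1) ∣ F) :
    (X : k[X]) ^ j ∣ derivative F := by
  obtain ⟨u, rfl⟩ := h
  rw [derivative_mul, derivative_X_pow]
  have h1 : (X : k[X]) ^ j ∣ C ((j + 1 : ℕ) : k) * X ^ (j + 1 - 1) * u :=
    ⟨C ((j + 1 : ℕ) : k) * u, by rw [Nat.add_sub_cancel]; ring⟩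
  exact dvd_add h1 ⟨X * derivative u, by ring⟩

lemma poly_step [CharP k p] (hp : p.Prime) {i m : ℕ} (hi2 : i + 2 ≤ p) (hmi : m ≤ i)
    (hmp : i + m + 1 ≤ p)
    {F G : k[X]} (hF1 : X ^ (i + 1) ∣ F) (hF2 : ¬ X ^ (i + 2) ∣ F)
    (hB : (X : k[X]) ^ p ∣ F * derivative G - G * derivative F)
    (hm : X ^ m ∣ G) : X ^ (m + 1) ∣ G := by
  obtain ⟨u, rfl⟩ := hF1
  obtain ⟨H, rfl⟩ := hm
  have hu0 : u.coeff 0 ≠ 0 := by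
    intro h0
    obtain ⟨v, rfl⟩ := X_dvd_iff.mpr h0
    exact hF2 ⟨v, by ring⟩
  set W : k[X] := C ((m : k) - ((i : k) + 1)) * (u * H) +
      X * (u * derivative H - H * derivative u) with hW
  have hkey : X ^ (i + 1) * u * derivative (X ^ m * H) -
      X ^ m * H * derivative (X ^ (i + 1) * u) = X ^ (i + m) * W := by
    rw [derivative_mul, derivative_mul, derivative_X_pow, derivative_X_pow, hW]
    rcases m with _ | m'
    · rw [Nat.add_sub_cancel]
      simp only [Nat.cast_add, Nat.cast_one, Nat.cast_zero, C_sub, C_add, C_1, C_0]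
      ring
    · rw [Nat.add_sub_cancel, Nat.add_sub_cancel]
      simp only [Nat.cast_add, Nat.cast_one, C_sub, C_add, C_1]
      ring
  rw [hkey] at hB
  have hcancel : (X : k[X]) ∣ W := by
    have h1 : (X : k[X]) ^ (i + m) * X ^ (p - (i + m)) ∣ X ^ (i + m) * W := by
      rw [← pow_add]
      have : i + m + (p - (i + m)) = p := by omega
      rw [this]; exact hB
    have h2 : (X : k[X]) ^ (p - (i + m)) ∣ W :=
      (mul_dvd_mul_iff_left (pow_ne_zero _ X_ne_zero)).mp h1
    exact dvd_trans (dvd_trans (by rw [pow_one]) (pow_dvd_pow X (by omega : 1 ≤ p - (i + m)))) h2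
  rw [X_dvd_iff, hW] at hcancel
  simp only [coeff_add, mul_coeff_zero, coeff_C_zero, coeff_X_zero, zero_mul, add_zero] at hcancel
  have hcoef : ((m : k) - ((i : k) + 1)) ≠ 0 := by
    intro hc
    have hmk : (((i + 1 - m : ℕ)) : k) = 0 := by
      rw [Nat.cast_sub (by omega : m ≤ i + 1)]
      push_cast
      rw [sub_eq_zero.mp hc, sub_self]
    rw [CharP.cast_eq_zero_iff k p] at hmk
    have := Nat.le_of_dvd (by omega) hmk
    omega
  have hH0 : H.coeff 0 = 0 := by
    rcases mul_eq_zero.mp hcancel with h | h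
    · exact absurd h hcoef
    · rcases mul_eq_zero.mp h with h' | h'
      · exact absurd h' hu0
      · exact h'
  obtain ⟨H2, rfl⟩ := X_dvd_iff.mpr hH0
  exact ⟨H2, by ring⟩

lemma poly_forward [CharP k p] (hp : p.Prime) {i : ℕ} (hi1 : p - 1 ≤ 2 * i) (hi2 : i + 2 ≤ p)
    {F G : k[X]} (hF1 : X ^ (i + 1) ∣ F) (hF2 : ¬ X ^ (i + 2) ∣ F)
    (hB : (X : k[X]) ^ p ∣ F * derivative G - G * derivative F) :
    (X : k[X]) ^ (p - i) ∣ G := by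
  suffices h : ∀ m, m ≤ p - i → (X : k[X]) ^ m ∣ G from h _ le_rfl
  intro m
  induction m with
  | zero => intro _; simpa using one_dvd G
  | succ m ih =>
    intro hm
    exact poly_step hp hi2 (by omega) (by omega) hF1 hF2 hB (ih (by omega))

lemma poly_backward {i : ℕ} (hi2 : i + 2 ≤ p)
    {F G : k[X]} (hF1 : X ^ (i + 1) ∣ F) (hG : (X : k[X]) ^ (p - i) ∣ G) :
    (X : k[X]) ^ p ∣ F * derivative G - G * derivative F := by
  apply dvd_sub
  · have hdG : (X : k[X]) ^ (p - i - 1) ∣ derivative G := by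
      apply poly_dvd_derivative
      have : p - i - 1 + 1 = p - i := by omega
      rw [this]; exact hG
    have := mul_dvd_mul hF1 hdG
    rw [← pow_add] at this
    have he : i + 1 + (p - i - 1) = p := by omega
    rwa [he] at this
  · have hdF : (X : k[X]) ^ i ∣ derivative F := poly_dvd_derivative hF1
    have := mul_dvd_mul hG hdF
    rw [← pow_add] at this
    have he : p - i + i = p := by omega
    rwa [he] at this

end Poly


/-- For `(p-1)/2 ≤ i ≤ p-2`, the set `C(i) = {(x,y) ∈ N × N : x ∈ g_i \ g_{i+1}, [x,y] = 0}`
equals `(g_i \ g_{i+1}) × g_{p-1-i}`; that is, for `x ∈ g_i \ g_{i+1}` and `y ∈ N` one has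
`[x,y] = 0` iff `y ∈ g_{p-1-i}`, and every element of `g_{p-1-i}` lies in `N`.
Here `g_j = {d : d(X) ∈ X^{j+1}·A}` (so `g_{p-1-i} = {d : d(X) ∈ X^{p-i}·A}`) and
`N = {x : x^p = 0}`. -/
theorem witt_C_large (p : ℕ) (hp : p.Prime) (hp3 : 3 < p)
    (k : Type*) [Field k] [IsAlgClosed k] [CharP k p]
    (i : ℕ) (hi1 : p - 1 ≤ 2 * i) (hi2 : i ≤ p - 2) :
    ({q : Derivation k (WittA k p) (WittA k p) × Derivation k (WittA k p) (WittA k p) |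
        (q.1.toLinearMap ^ p = 0 ∧ q.2.toLinearMap ^ p = 0) ∧
        (q.1 (WittX k p) ∈ Ideal.span {WittX k p ^ (i + 1)} ∧
          q.1 (WittX k p) ∉ Ideal.span {WittX k p ^ (i + 2)}) ∧ ⁅q.1, q.2⁆ = 0} =
      {x : Derivation k (WittA k p) (WittA k p) |
          x (WittX k p) ∈ Ideal.span {WittX k p ^ (i + 1)} ∧
            x (WittX k p) ∉ Ideal.span {WittX k p ^ (i + 2)}} ×ˢ
        {y : Derivation k (WittA k p) (WittA k p) |
          y (WittX k p) ∈ Ideal.span {WittX k p ^ (p - i)}}) ∧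
    (∀ x y : Derivation k (WittA k p) (WittA k p),
      x (WittX k p) ∈ Ideal.span {WittX k p ^ (i + 1)} →
      x (WittX k p) ∉ Ideal.span {WittX k p ^ (i + 2)} →
      y.toLinearMap ^ p = 0 →
        (⁅x, y⁆ = 0 ↔ y (WittX k p) ∈ Ideal.span {WittX k p ^ (p - i)})) ∧
    (∀ y : Derivation k (WittA k p) (WittA k p),
      y (WittX k p) ∈ Ideal.span {WittX k p ^ (p - i)} → y.toLinearMap ^ p = 0) := by
  have hp4 : 4 ≤ p := by omega
  have hi0 : 2 ≤ i := by omega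
  have hspan2 : ∀ j, 2 ≤ j →
      Ideal.span {WittX k p ^ j} ≤ Ideal.span {WittX k p ^ 2} := fun j hj =>
    Ideal.span_singleton_le_span_singleton.mpr (pow_dvd_pow _ hj)
  have C3 : ∀ y : Derivation k (WittA k p) (WittA k p),
      y (WittX k p) ∈ Ideal.span {WittX k p ^ (p - i)} → y.toLinearMap ^ p = 0 := by
    intro y hy
    exact witt_nilp (by omega) y (hspan2 (p - i) (by omega) hy)
  have C2 : ∀ x y : Derivation k (WittA k p) (WittA k p),
      x (WittX k p) ∈ Ideal.span {WittX k p ^ (i + 1)} →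
      x (WittX k p) ∉ Ideal.span {WittX k p ^ (i + 2)} →
        (⁅x, y⁆ = 0 ↔ y (WittX k p) ∈ Ideal.span {WittX k p ^ (p - i)}) := by
    intro x y hx1 hx2
    obtain ⟨F, hF⟩ := Ideal.Quotient.mk_surjective (x (WittX k p))
    obtain ⟨G, hG⟩ := Ideal.Quotient.mk_surjective (y (WittX k p))
    rw [← hF, witt_mem_span_iff (by omega)] at hx1
    rw [← hF, witt_mem_span_iff (by omega)] at hx2
    rw [witt_bracket_iff x y hF hG, ← hG,
      witt_mem_span_iff (show p - i ≤ p by omega)]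
    constructor
    · intro hB
      exact poly_forward hp hi1 (by omega) hx1 hx2 hB
    · intro hG'
      exact poly_backward (by omega) hx1 hG'
  refine ⟨?_, fun x y hx1 hx2 _ => C2 x y hx1 hx2, C3⟩
  ext ⟨x, y⟩
  simp only [Set.mem_setOf_eq, Set.mem_prod]
  constructor
  · rintro ⟨⟨hxN, hyN⟩, ⟨hx1, hx2⟩, hbr⟩
    exact ⟨⟨hx1, hx2⟩, (C2 x y hx1 hx2).mp hbr⟩
  · rintro ⟨⟨hx1, hx2⟩, hy⟩
    refine ⟨⟨witt_nilp (by omega) x (hspan2 (i + 1) (by omega) hx1), C3 y hy⟩,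
      ⟨hx1, hx2⟩, (C2 x y hx1 hx2).mpr hy⟩
end

section
/- Let B⁻ = span_k{D, XD} ⊆ g, where D and XD are the derivations of A with D(X) = 1 and (XD)(X) = X. Then the set of nilpotent elements of B⁻ is N(B⁻) = k·D; that is, for a, b ∈ k, the derivation a•D + b•XD satisfies (a•D + b•XD)^p = 0 as a k-linear endomorphism of A if and only if b = 0. Consequently, the nilpotent commuting variety of B⁻ satisfies C(N(B⁻)) = N(B⁻) × N(B⁻). -/
open Polynomial

set_option synthInstance.maxHeartbeats 1000000
set_option maxHeartbeats 1000000

section AuxWitt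

variable {p : ℕ} {k : Type*} [Field k]

lemma wittX_pow_eq_zero {n : ℕ} (hn : p ≤ n) : (WittX k p) ^ n = 0 := by
  rw [show (WittX k p) ^ n = Ideal.Quotient.mk _ (X ^ n) by simp,
    Ideal.Quotient.eq_zero_iff_mem, Ideal.mem_span_singleton]
  exact pow_dvd_pow X hn

lemma deriv_pow_apply (D : Derivation k (WittA k p) (WittA k p))
    (hD : D (WittX k p) = 1) (m n : ℕ) :
    (D.toLinearMap ^ m) (WittX k p ^ n) =
      (n.descFactorial m : k) • WittX k p ^ (n - m) := by
  induction m with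
  | zero => simp
  | succ m ih =>
      rw [pow_succ', Module.End.mul_apply, ih, map_smul]
      have h1 : D (WittX k p ^ (n - m)) = ((n - m : ℕ) : k) • WittX k p ^ (n - m - 1) := by
        rw [Derivation.leibniz_pow, hD, smul_eq_mul, mul_one, Nat.cast_smul_eq_nsmul]
      simp only [Derivation.coeFn_coe]
      rw [h1, smul_smul, Nat.sub_sub, Nat.descFactorial_succ, Nat.cast_mul, mul_comm]

lemma derivation_pow_p_eq_zero (D : Derivation k (WittA k p) (WittA k p))
    (hD : D (WittX k p) = 1) : D.toLinearMap ^ p = 0 := by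
  refine LinearMap.ext fun a => ?_
  obtain ⟨f, rfl⟩ := Ideal.Quotient.mk_surjective (I := Ideal.span ({X ^ p} : Set k[X])) a
  induction f using Polynomial.induction_on' with
  | add f g hf hg => rw [map_add, map_add, hf, hg]; simp
  | monomial n c =>
      have hmk : (Ideal.Quotient.mk (Ideal.span ({X ^ p} : Set k[X]))) (monomial n c)
          = c • (WittX k p) ^ n := by
        rw [← C_mul_X_pow_eq_monomial, C_mul', ← Ideal.Quotient.mkₐ_eq_mk k, map_smul,
          map_pow, Ideal.Quotient.mkₐ_eq_mk]
      rcases lt_or_ge n p with h | h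
      · rw [hmk, map_smul, deriv_pow_apply D hD]
        simp [Nat.descFactorial_eq_zero_iff_lt.mpr h]
      · rw [hmk, wittX_pow_eq_zero h]
        simp

lemma lpow_apply_X (D E : Derivation k (WittA k p) (WittA k p))
    (hD : D (WittX k p) = 1) (hE : E (WittX k p) = WittX k p) (a b : k) :
    ∀ n : ℕ, (((a • D + b • E).toLinearMap) ^ (n + 1)) (WittX k p) =
      b ^ (n + 1) • WittX k p + (a * b ^ n) • (1 : WittA k p) := by
  intro n
  induction n with
  | zero =>
      simp [hD, hE, add_comm]
  | succ n ih =>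
      rw [pow_succ', Module.End.mul_apply, ih]
      simp only [map_add, map_smul, Derivation.coeFn_coe, Derivation.add_apply,
        Derivation.smul_apply, hD, hE, Derivation.map_one_eq_zero]
      rw [smul_zero, add_zero, smul_add, smul_smul, smul_smul]
      rw [add_comm, mul_comm (b ^ (n+1)) a, ← pow_succ]

lemma one_X_indep (hp : 1 < p) {c d : k}
    (h : c • WittX k p + d • (1 : WittA k p) = 0) : c = 0 := by
  have hmk : (Ideal.Quotient.mk (Ideal.span ({X ^ p} : Set k[X])))
      (c • X + d • (1 : k[X])) = 0 := by
    rw [← Ideal.Quotient.mkₐ_eq_mk k, map_add, map_smul, map_smul, map_one,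
      Ideal.Quotient.mkₐ_eq_mk]
    exact h
  rw [Ideal.Quotient.eq_zero_iff_mem, Ideal.mem_span_singleton] at hmk
  have hz : c • X + d • (1 : k[X]) = 0 := by
    refine Polynomial.eq_zero_of_dvd_of_degree_lt hmk ?_
    rw [degree_X_pow]
    refine lt_of_le_of_lt (degree_add_le _ _) (max_lt ?_ ?_)
    · refine lt_of_le_of_lt (degree_smul_le _ _) ?_
      rw [degree_X]
      exact_mod_cast hp
    · refine lt_of_le_of_lt (degree_smul_le _ _) ?_
      rw [degree_one]
      exact_mod_cast Nat.lt_of_lt_of_le Nat.zero_lt_one hp.le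
  have := congrArg (fun q => Polynomial.coeff q 1) hz
  simpa [Polynomial.smul_X, coeff_one] using this

end AuxWitt

/-- Let `B⁻ = span_k{D, XD} ⊆ g = Der_k(A)`, where `D(X) = 1` and `(XD)(X) = X`.  Then
`N(B⁻) = k·D`: for `a, b ∈ k` the derivation `a•D + b•XD` satisfies `(a•D + b•XD)^p = 0`
iff `b = 0`.  Consequently `C(N(B⁻)) = N(B⁻) × N(B⁻)`. -/
theorem witt_borel_minus_nilpotent_commuting (p : ℕ) (hp : p.Prime) (hp3 : 3 < p)
    (k : Type*) [Field k] [IsAlgClosed k] [CharP k p]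
    (D E : Derivation k (WittA k p) (WittA k p))
    (hD : D (WittX k p) = 1) (hE : E (WittX k p) = WittX k p) :
    (∀ a b : k, ((a • D + b • E).toLinearMap ^ p = 0 ↔ b = 0)) ∧
    {x : Derivation k (WittA k p) (WittA k p) |
        x ∈ Submodule.span k ({D, E} : Set (Derivation k (WittA k p) (WittA k p))) ∧
          x.toLinearMap ^ p = 0} =
      Set.range (fun a : k => a • D) ∧
    {q : Derivation k (WittA k p) (WittA k p) × Derivation k (WittA k p) (WittA k p) |
        (q.1 ∈ Submodule.span k ({D, E} : Set (Derivation k (WittA k p) (WittA k p))) ∧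
            q.1.toLinearMap ^ p = 0) ∧
        (q.2 ∈ Submodule.span k ({D, E} : Set (Derivation k (WittA k p) (WittA k p))) ∧
            q.2.toLinearMap ^ p = 0) ∧ ⁅q.1, q.2⁆ = 0} =
      {x : Derivation k (WittA k p) (WittA k p) |
          x ∈ Submodule.span k ({D, E} : Set (Derivation k (WittA k p) (WittA k p))) ∧
            x.toLinearMap ^ p = 0} ×ˢ
        {x : Derivation k (WittA k p) (WittA k p) |
          x ∈ Submodule.span k ({D, E} : Set (Derivation k (WittA k p) (WittA k p))) ∧
            x.toLinearMap ^ p = 0} := by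
  have key : ∀ a b : k, ((a • D + b • E).toLinearMap ^ p = 0 ↔ b = 0) := by
    intro a b
    constructor
    · intro h
      have hp1 : p - 1 + 1 = p := Nat.succ_pred_eq_of_pos hp.pos
      have h0 := lpow_apply_X D E hD hE a b (p - 1)
      rw [hp1, h, LinearMap.zero_apply] at h0
      have hb : b ^ p = 0 := one_X_indep hp.one_lt h0.symm
      exact (pow_eq_zero_iff hp.ne_zero).mp hb
    · rintro rfl
      rw [zero_smul, add_zero, Derivation.coe_smul_linearMap, _root_.smul_pow,
        derivation_pow_p_eq_zero D hD, smul_zero]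
  have hN : {x : Derivation k (WittA k p) (WittA k p) |
      x ∈ Submodule.span k ({D, E} : Set (Derivation k (WittA k p) (WittA k p))) ∧
        x.toLinearMap ^ p = 0} = Set.range (fun a : k => a • D) := by
    ext x
    simp only [Set.mem_setOf_eq, Set.mem_range]
    constructor
    · rintro ⟨hx, hnil⟩
      obtain ⟨a, b, hab⟩ := Submodule.mem_span_pair.mp hx
      rw [← hab] at hnil
      have hb : b = 0 := (key a b).mp hnil
      exact ⟨a, by rw [← hab, hb, zero_smul, add_zero]⟩
    · rintro ⟨a, rfl⟩
      refine ⟨Submodule.smul_mem _ _ (Submodule.subset_span (by simp)), ?_⟩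
      have h0 := (key a 0).mpr rfl
      simpa using h0
  refine ⟨key, hN, ?_⟩
  ext q
  simp only [Set.mem_setOf_eq, Set.mem_prod]
  constructor
  · rintro ⟨h1, h2, _⟩
    exact ⟨h1, h2⟩
  · rintro ⟨h1, h2⟩
    refine ⟨h1, h2, ?_⟩
    have h1' : q.1 ∈ Set.range (fun a : k => a • D) := by
      rw [← hN]; exact h1
    have h2' : q.2 ∈ Set.range (fun a : k => a • D) := by
      rw [← hN]; exact h2
    obtain ⟨a, ha⟩ := h1'
    obtain ⟨c, hc⟩ := h2'
    rw [← ha, ← hc]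
    simp only
    ext x
    simp [Derivation.commutator_apply, smul_smul, mul_comm]
end

section
/- If k has characteristic 3, then the Witt algebra W_1 = Der_k(k[X]/(X^3)) is isomorphic as a Lie algebra over k to sl_2(k), the special linear Lie algebra of traceless 2×2 matrices over k. -/
open Polynomial

set_option synthInstance.maxHeartbeats 1000000
set_option maxHeartbeats 1000000

section W

set_option linter.unusedSectionVars false

variable (k : Type*) [Field k] [CharP k 3]

noncomputable def preD (a : WittA k 3) : k[X] →ₗ[k] WittA k 3 :=
  (LinearMap.mulLeft k a).comp
    (((Ideal.Quotient.mkₐ k (Ideal.span ({X ^ 3} : Set k[X]))).toLinearMap).comp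
      (Polynomial.derivative : k[X] →ₗ[k] k[X]))

lemma preD_apply (a : WittA k 3) (p : k[X]) :
    preD k a p = a * Ideal.Quotient.mk (Ideal.span ({X ^ 3} : Set k[X])) (derivative p) := rfl

lemma preD_vanish (a : WittA k 3) :
    (Ideal.span ({X ^ 3} : Set k[X])).restrictScalars k ≤ LinearMap.ker (preD k a) := by
  intro p hp
  rw [Submodule.restrictScalars_mem, Ideal.mem_span_singleton] at hp
  obtain ⟨q, rfl⟩ := hp
  have h3 : derivative (X ^ 3 : k[X]) = 0 := by
    rw [derivative_X_pow]
    have h : (3 : k) = 0 := by simpa using CharP.cast_eq_zero k 3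
    simp [h]
  rw [LinearMap.mem_ker, preD_apply, derivative_mul, h3, zero_mul, zero_add, map_mul]
  have : Ideal.Quotient.mk (Ideal.span ({X ^ 3} : Set k[X])) (X ^ 3) = 0 := by
    rw [Ideal.Quotient.eq_zero_iff_mem]
    exact Ideal.mem_span_singleton_self _
  rw [this, zero_mul, mul_zero]

/-- The derivation `a · d/dx` on `k[X]/(X³)`. -/
noncomputable def wder (a : WittA k 3) : Derivation k (WittA k 3) (WittA k 3) where
  toLinearMap := Submodule.liftQ ((Ideal.span ({X ^ 3} : Set k[X])).restrictScalars k)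
    (preD k a) (preD_vanish k a)
  map_one_eq_zero' := by
    show preD k a 1 = 0
    simp [preD_apply]
  leibniz' := by
    intro x y
    obtain ⟨p, rfl⟩ := Ideal.Quotient.mk_surjective x
    obtain ⟨q, rfl⟩ := Ideal.Quotient.mk_surjective y
    show preD k a (p * q) = _ • preD k a q + _ • preD k a p
    simp only [preD_apply, derivative_mul, map_add, map_mul, smul_eq_mul]
    ring

@[simp] lemma wder_mk (a : WittA k 3) (p : k[X]) :
    wder k a (Ideal.Quotient.mk (Ideal.span ({X ^ 3} : Set k[X])) p)
      = a * Ideal.Quotient.mk (Ideal.span ({X ^ 3} : Set k[X])) (derivative p) := rfl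

@[simp] lemma wder_X (a : WittA k 3) : wder k a (WittX k 3) = a := by
  rw [WittX, wder_mk, derivative_X, map_one, mul_one]

lemma two_smul_eq (y : WittA k 3) : (2 : k) • y = 2 * y := by
  rw [show (2 : k) = 1 + 1 by norm_num, add_smul, one_smul, two_mul]

@[simp] lemma wder_x2 (a : WittA k 3) :
    wder k a (WittX k 3 ^ 2) = (2 : k) • (a * WittX k 3) := by
  have h2 : ((WittX k 3) ^ 2) = Ideal.Quotient.mk (Ideal.span ({X ^ 3} : Set k[X])) (X ^ 2) := by
    rw [map_pow]
  have hd : derivative (X ^ 2 : k[X]) = C (2 : k) * X := by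
    rw [derivative_X_pow]; norm_num
  have hC : (Ideal.Quotient.mk (Ideal.span ({X ^ 3} : Set k[X]))) (C (2 : k))
      = algebraMap k (WittA k 3) 2 := by
    rw [← Polynomial.algebraMap_eq]
    rfl
  rw [h2, wder_mk, hd, map_mul, hC, map_ofNat, two_smul_eq]
  ring

/-- Derivations of `k[X]/(X³)` are determined by their value at `x`. -/
lemma wext {D₁ D₂ : Derivation k (WittA k 3) (WittA k 3)}
    (h : D₁ (WittX k 3) = D₂ (WittX k 3)) : D₁ = D₂ := by
  have hadj : Algebra.adjoin k ({WittX k 3} : Set (WittA k 3)) = ⊤ := by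
    have h2 : Subalgebra.map (Ideal.Quotient.mkₐ k (Ideal.span ({X ^ 3} : Set k[X])))
        (Algebra.adjoin k ({X} : Set k[X]))
        = Algebra.adjoin k ({WittX k 3} : Set (WittA k 3)) := by
      rw [AlgHom.map_adjoin]
      congr 1
      exact Set.image_singleton
    rw [← h2, Polynomial.adjoin_X, Algebra.map_top, AlgHom.range_eq_top]
    exact Ideal.Quotient.mkₐ_surjective k _
  exact Derivation.ext fun a =>
    Derivation.eqOn_adjoin (Set.eqOn_singleton.2 h) (hadj.symm ▸ trivial)

/-- `a ↦ a·d/dx` as a linear equivalence onto the Witt algebra. -/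
noncomputable def e1 : WittA k 3 ≃ₗ[k] Derivation k (WittA k 3) (WittA k 3) where
  toFun := wder k
  map_add' a b := wext k (by simp [Derivation.add_apply])
  map_smul' c a := wext k (by simp [Derivation.smul_apply])
  invFun D := D (WittX k 3)
  left_inv a := wder_X k a
  right_inv D := wext k (wder_X k _)

noncomputable def bA : Module.Basis (Fin 3) k (WittA k 3) :=
  ((AdjoinRoot.powerBasis (f := (X ^ 3 : k[X])) (pow_ne_zero _ X_ne_zero)).basis.reindex
    (finCongr (by simp)))

lemma bA_apply (i : Fin 3) : bA k i = WittX k 3 ^ (i : ℕ) := by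
  have h : ∀ (j : Fin 3),
      ((AdjoinRoot.powerBasis (f := (X ^ 3 : k[X])) (pow_ne_zero _ X_ne_zero)).basis.reindex
        (finCongr (by simp)) : Module.Basis (Fin 3) k (AdjoinRoot (X ^ 3 : k[X]))) j
        = AdjoinRoot.root (X ^ 3 : k[X]) ^ (j : ℕ) := by
    intro j
    rw [Module.Basis.reindex_apply, PowerBasis.basis_eq_pow, AdjoinRoot.powerBasis_gen]
    congr 1
  exact h i

/-- Module.Basis of the Witt algebra: `d/dx, x·d/dx, x²·d/dx`. -/
noncomputable def bW : Module.Basis (Fin 3) k (Derivation k (WittA k 3) (WittA k 3)) :=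
  (bA k).map (e1 k)

lemma bW_apply (i : Fin 3) : bW k i = wder k (WittX k 3 ^ (i : ℕ)) := by
  rw [bW, Module.Basis.map_apply, bA_apply]; rfl

/-- Coordinates on `sl₂` adapted to the basis `(-F, 2H, E)`. -/
noncomputable def slCoord : LieAlgebra.SpecialLinear.sl (Fin 2) k ≃ₗ[k] (Fin 3 → k) where
  toFun M := ![-(M.val 1 0), 2 * M.val 0 0, M.val 0 1]
  invFun v := ⟨!![2 * v 1, v 2; -(v 0), -(2 * v 1)], by
    have : Matrix.trace (!![2 * v 1, v 2; -(v 0), -(2 * v 1)] : Matrix (Fin 2) (Fin 2) k) = 0 := by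
      rw [Matrix.trace_fin_two]
      simp
    exact LinearMap.mem_ker.mpr this⟩
  map_add' M N := by
    funext j
    fin_cases j <;> simp <;> ring
  map_smul' c M := by
    have hs : ((c • M : LieAlgebra.SpecialLinear.sl (Fin 2) k) : Matrix (Fin 2) (Fin 2) k)
        = c • (M : Matrix (Fin 2) (Fin 2) k) := rfl
    funext j
    fin_cases j <;> simp [hs] <;> ring
  left_inv M := by
    have h3 : (3 : k) = 0 := by simpa using CharP.cast_eq_zero k 3
    have htr : M.val 0 0 + M.val 1 1 = 0 := by
      have h' : Matrix.trace M.val = 0 := M.property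
      rwa [Matrix.trace_fin_two] at h'
    apply Subtype.ext
    ext i j
    fin_cases i <;> fin_cases j <;> simp <;>
      first
      | linear_combination M.val 0 0 * h3
      | linear_combination -(M.val 0 0) * h3
      | linear_combination htr + M.val 0 0 * h3
      | linear_combination htr - M.val 0 0 * h3
      | linear_combination -htr + M.val 0 0 * h3
      | linear_combination -htr - M.val 0 0 * h3
      | ring1
  right_inv v := by
    have h3 : (3 : k) = 0 := by simpa using CharP.cast_eq_zero k 3
    funext j
    fin_cases j <;> simp <;>
      first
      | linear_combination v 1 * h3
      | linear_combination -(v 1) * h3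
      | ring1

noncomputable def bS : Module.Basis (Fin 3) k (LieAlgebra.SpecialLinear.sl (Fin 2) k) :=
  Module.Basis.ofEquivFun (slCoord k)

lemma bS_eq (i : Fin 3) : bS k i = (slCoord k).symm (Pi.single i 1) := by
  rw [bS, Module.Basis.coe_ofEquivFun]

lemma bS_val0 : ((bS k 0 : LieAlgebra.SpecialLinear.sl (Fin 2) k) : Matrix (Fin 2) (Fin 2) k)
    = !![0, 0; -1, 0] := by
  rw [bS_eq]
  ext r c
  fin_cases r <;> fin_cases c <;> simp [slCoord, Pi.single_apply]

lemma bS_val1 : ((bS k 1 : LieAlgebra.SpecialLinear.sl (Fin 2) k) : Matrix (Fin 2) (Fin 2) k)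
    = !![2, 0; 0, -2] := by
  rw [bS_eq]
  ext r c
  fin_cases r <;> fin_cases c <;> simp [slCoord, Pi.single_apply]

lemma bS_val2 : ((bS k 2 : LieAlgebra.SpecialLinear.sl (Fin 2) k) : Matrix (Fin 2) (Fin 2) k)
    = !![0, 1; 0, 0] := by
  rw [bS_eq]
  ext r c
  fin_cases r <;> fin_cases c <;> simp [slCoord, Pi.single_apply]

noncomputable def phi : Derivation k (WittA k 3) (WittA k 3) ≃ₗ[k]
    LieAlgebra.SpecialLinear.sl (Fin 2) k :=
  (bW k).equiv (bS k) (Equiv.refl _)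

lemma phi_apply (i : Fin 3) : phi k (bW k i) = bS k i := by
  rw [phi, Module.Basis.equiv_apply]; rfl

lemma bW0 : bW k 0 = wder k 1 := by rw [bW_apply]; norm_num

lemma bW1 : bW k 1 = wder k (WittX k 3) := by rw [bW_apply]; norm_num

lemma bW2 : bW k 2 = wder k (WittX k 3 ^ 2) := by rw [bW_apply]; norm_num

lemma br01 : ⁅bW k 0, bW k 1⁆ = bW k 0 := by
  rw [bW0, bW1]
  apply wext
  simp [Derivation.commutator_apply]

lemma br10 : ⁅bW k 1, bW k 0⁆ = -(bW k 0) := by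
  rw [← lie_skew (L := Derivation k (WittA k 3) (WittA k 3)), br01]

lemma br02 : ⁅bW k 0, bW k 2⁆ = (2 : k) • bW k 1 := by
  rw [bW0, bW1, bW2]
  apply wext
  simp [Derivation.commutator_apply, Derivation.smul_apply, two_smul_eq]

lemma br20 : ⁅bW k 2, bW k 0⁆ = -((2 : k) • bW k 1) := by
  rw [← lie_skew (L := Derivation k (WittA k 3) (WittA k 3)), br02]

lemma br12 : ⁅bW k 1, bW k 2⁆ = bW k 2 := by
  rw [bW1, bW2]
  apply wext
  simp only [Derivation.commutator_apply, wder_X, wder_x2, two_smul_eq]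
  ring

lemma br21 : ⁅bW k 2, bW k 1⁆ = -(bW k 2) := by
  rw [← lie_skew (L := Derivation k (WittA k 3) (WittA k 3)), br12]

lemma key_bracket (i j : Fin 3) :
    phi k ⁅bW k i, bW k j⁆ = ⁅phi k (bW k i), phi k (bW k j)⁆ := by
  have h3 : (3 : k) = 0 := by simpa using CharP.cast_eq_zero k 3
  fin_cases i <;> fin_cases j
  · simp [lie_self (L := Derivation k (WittA k 3) (WittA k 3))]
  · show phi k ⁅bW k 0, bW k 1⁆ = ⁅phi k (bW k 0), phi k (bW k 1)⁆
    rw [br01]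
    simp only [phi_apply]
    apply Subtype.ext
    show ((bS k 0 : LieAlgebra.SpecialLinear.sl (Fin 2) k) : Matrix (Fin 2) (Fin 2) k)
      = (bS k 0).val * (bS k 1).val - (bS k 1).val * (bS k 0).val
    rw [bS_val0, bS_val1]
    ext r c
    fin_cases r <;> fin_cases c <;>
      simp [Matrix.mul_apply, Fin.sum_univ_two] <;>
      first | ring1 | linear_combination h3 | linear_combination -h3
  · show phi k ⁅bW k 0, bW k 2⁆ = ⁅phi k (bW k 0), phi k (bW k 2)⁆
    rw [br02, map_smul]
    simp only [phi_apply]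
    apply Subtype.ext
    show (2 : k) • ((bS k 1 : LieAlgebra.SpecialLinear.sl (Fin 2) k) : Matrix (Fin 2) (Fin 2) k)
      = (bS k 0).val * (bS k 2).val - (bS k 2).val * (bS k 0).val
    rw [bS_val0, bS_val1, bS_val2]
    ext r c
    fin_cases r <;> fin_cases c <;>
      simp [Matrix.mul_apply, Fin.sum_univ_two] <;>
      first | ring1 | linear_combination h3 | linear_combination -h3
  · show phi k ⁅bW k 1, bW k 0⁆ = ⁅phi k (bW k 1), phi k (bW k 0)⁆
    rw [br10, map_neg (phi k)]
    simp only [phi_apply]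
    apply Subtype.ext
    show -((bS k 0 : LieAlgebra.SpecialLinear.sl (Fin 2) k) : Matrix (Fin 2) (Fin 2) k)
      = (bS k 1).val * (bS k 0).val - (bS k 0).val * (bS k 1).val
    rw [bS_val0, bS_val1]
    ext r c
    fin_cases r <;> fin_cases c <;>
      simp [Matrix.mul_apply, Fin.sum_univ_two] <;>
      first | ring1 | linear_combination h3 | linear_combination -h3
  · simp [lie_self (L := Derivation k (WittA k 3) (WittA k 3))]
  · show phi k ⁅bW k 1, bW k 2⁆ = ⁅phi k (bW k 1), phi k (bW k 2)⁆
    rw [br12]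
    simp only [phi_apply]
    apply Subtype.ext
    show ((bS k 2 : LieAlgebra.SpecialLinear.sl (Fin 2) k) : Matrix (Fin 2) (Fin 2) k)
      = (bS k 1).val * (bS k 2).val - (bS k 2).val * (bS k 1).val
    rw [bS_val1, bS_val2]
    ext r c
    fin_cases r <;> fin_cases c <;>
      simp [Matrix.mul_apply, Fin.sum_univ_two] <;>
      first | ring1 | linear_combination h3 | linear_combination -h3
  · show phi k ⁅bW k 2, bW k 0⁆ = ⁅phi k (bW k 2), phi k (bW k 0)⁆
    rw [br20, map_neg (phi k), map_smul]
    simp only [phi_apply]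
    apply Subtype.ext
    show -((2 : k) • ((bS k 1 : LieAlgebra.SpecialLinear.sl (Fin 2) k)
        : Matrix (Fin 2) (Fin 2) k))
      = (bS k 2).val * (bS k 0).val - (bS k 0).val * (bS k 2).val
    rw [bS_val0, bS_val1, bS_val2]
    ext r c
    fin_cases r <;> fin_cases c <;>
      simp [Matrix.mul_apply, Fin.sum_univ_two] <;>
      first | ring1 | linear_combination h3 | linear_combination -h3
  · show phi k ⁅bW k 2, bW k 1⁆ = ⁅phi k (bW k 2), phi k (bW k 1)⁆
    rw [br21, map_neg (phi k)]
    simp only [phi_apply]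
    apply Subtype.ext
    show -((bS k 2 : LieAlgebra.SpecialLinear.sl (Fin 2) k) : Matrix (Fin 2) (Fin 2) k)
      = (bS k 2).val * (bS k 1).val - (bS k 1).val * (bS k 2).val
    rw [bS_val1, bS_val2]
    ext r c
    fin_cases r <;> fin_cases c <;>
      simp [Matrix.mul_apply, Fin.sum_univ_two] <;>
      first | ring1 | linear_combination h3 | linear_combination -h3
  · simp [lie_self (L := Derivation k (WittA k 3) (WittA k 3))]

theorem witt_char_three_iso_sl2' :
    Nonempty (Derivation k (WittA k 3) (WittA k 3) ≃ₗ⁅k⁆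
      LieAlgebra.SpecialLinear.sl (Fin 2) k) := by
  refine ⟨{ toLinearMap := (phi k).toLinearMap, map_lie' := ?_, invFun := (phi k).symm,
            left_inv := (phi k).left_inv, right_inv := (phi k).right_inv }⟩
  intro x y
  show phi k ⁅x, y⁆ = ⁅phi k x, phi k y⁆
  let B1 : Derivation k (WittA k 3) (WittA k 3) →ₗ[k]
      Derivation k (WittA k 3) (WittA k 3) →ₗ[k] LieAlgebra.SpecialLinear.sl (Fin 2) k :=
    LinearMap.mk₂ k (fun x y => phi k ⁅x, y⁆)
      (fun m n p => by rw [← map_add]; exact congrArg (phi k) (add_lie m n p))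
      (fun c m n => by rw [← map_smul]; exact congrArg (phi k) (smul_lie c m n))
      (fun m n p => by rw [← map_add]; exact congrArg (phi k) (lie_add m n p))
      (fun c m n => by rw [← map_smul]; exact congrArg (phi k) (lie_smul c m n))
  let B2 : Derivation k (WittA k 3) (WittA k 3) →ₗ[k]
      Derivation k (WittA k 3) (WittA k 3) →ₗ[k] LieAlgebra.SpecialLinear.sl (Fin 2) k :=
    LinearMap.mk₂ k (fun x y => ⁅phi k x, phi k y⁆)
      (fun m n p => by simp [add_lie]) (fun c m n => by simp [smul_lie])
      (fun m n p => by simp [lie_add]) (fun c m n => by simp [lie_smul])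
  have hB : B1 = B2 := by
    apply (bW k).ext
    intro i
    apply (bW k).ext
    intro j
    exact key_bracket k i j
  exact LinearMap.congr_fun (LinearMap.congr_fun hB x) y

end W

/-- If `k` has characteristic `3`, then the Witt algebra `W₁ = Der_k(k[X]/(X³))` is
isomorphic as a Lie algebra over `k` to `sl₂(k)`. -/
theorem witt_char_three_iso_sl2 (k : Type*) [Field k] [IsAlgClosed k] [CharP k 3] :
    Nonempty (Derivation k (WittA k 3) (WittA k 3) ≃ₗ⁅k⁆
      LieAlgebra.SpecialLinear.sl (Fin 2) k) :=
  witt_char_three_iso_sl2' k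
end
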